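/- The kernel D(A,B) = |μ(A) - μ(B)| / max{μ(A), μ(B)} (defined to be 0 when both measures are 0), where μ assigns a nonnegative real mass to each set, is conditionally negative definite. -/

import Mathlib

open Finset

/-- The `min` kernel is positive semidefinite on nonnegative reals. -/
lemma min_kernel_psd {ι : Type*} [DecidableEq ι] :
    ∀ (s : Finset ι) (x c : ι → ℝ), (∀ i ∈ s, 0 ≤ x i) →
      0 ≤ ∑ i ∈ s, ∑ j ∈ s, c i * c j * min (x i) (x j) := by
  intro s
  induction s using Finset.strongInduction with
  | _ s ih =>
    intro x c hx
    rcases s.eq_empty_or_nonempty with rfl | hne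
    · simp
    obtain ⟨i₀, hi₀, hmin⟩ := s.exists_min_image x hne
    set m := x i₀ with hm
    have key : ∀ i ∈ s, ∀ j ∈ s, c i * c j * min (x i) (x j)
        = c i * (c j * m) + c i * c j * min (x i - m) (x j - m) := by
      intro i hi j hj
      have : min (x i) (x j) = m + min (x i - m) (x j - m) := by
        rcases le_total (x i) (x j) with h | h
        · rw [min_eq_left h, min_eq_left (by linarith)]; ring
        · rw [min_eq_right h, min_eq_right (by linarith)]; ring
      rw [this]; ring
    have hsplit : ∑ i ∈ s, ∑ j ∈ s, c i * c j * min (x i) (x j)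
        = (∑ i ∈ s, c i) * ((∑ j ∈ s, c j) * m)
          + ∑ i ∈ s, ∑ j ∈ s, c i * c j * min (x i - m) (x j - m) :=
      calc ∑ i ∈ s, ∑ j ∈ s, c i * c j * min (x i) (x j)
          = ∑ i ∈ s, ∑ j ∈ s,
              (c i * (c j * m) + c i * c j * min (x i - m) (x j - m)) :=
            Finset.sum_congr rfl fun i hi => Finset.sum_congr rfl fun j hj => key i hi j hj
        _ = ∑ i ∈ s, (c i * ((∑ j ∈ s, c j) * m)
              + ∑ j ∈ s, c i * c j * min (x i - m) (x j - m)) := by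
            refine Finset.sum_congr rfl fun i hi => ?_
            rw [Finset.sum_add_distrib, ← Finset.mul_sum, ← Finset.sum_mul]
        _ = (∑ i ∈ s, c i) * ((∑ j ∈ s, c j) * m)
              + ∑ i ∈ s, ∑ j ∈ s, c i * c j * min (x i - m) (x j - m) := by
            rw [Finset.sum_add_distrib, ← Finset.sum_mul]
    rw [hsplit]
    have h1 : 0 ≤ (∑ i ∈ s, c i) * ((∑ j ∈ s, c j) * m) := by
      have : (∑ i ∈ s, c i) * ((∑ j ∈ s, c j) * m) = (∑ i ∈ s, c i) ^ 2 * m := by ring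
      rw [this]
      exact mul_nonneg (sq_nonneg _) (hx i₀ hi₀)
    have hB0 : ∀ j ∈ s, c i₀ * c j * min (x i₀ - m) (x j - m) = 0 := by
      intro j hj
      have hz : x i₀ - m = 0 := by rw [hm]; ring
      have : min (x i₀ - m) (x j - m) = 0 := by
        rw [hz]; exact min_eq_left (by linarith [hmin j hj])
      rw [this, mul_zero]
    have hB0' : ∀ i ∈ s, c i * c i₀ * min (x i - m) (x i₀ - m) = 0 := by
      intro i hi
      have hz : x i₀ - m = 0 := by rw [hm]; ring
      have : min (x i - m) (x i₀ - m) = 0 := by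
        rw [hz]; exact min_eq_right (by linarith [hmin i hi])
      rw [this, mul_zero]
    have h2 : ∑ i ∈ s, ∑ j ∈ s, c i * c j * min (x i - m) (x j - m)
        = ∑ i ∈ s.erase i₀, ∑ j ∈ s.erase i₀, c i * c j * min (x i - m) (x j - m) := by
      rw [← Finset.sum_erase s (Finset.sum_eq_zero hB0)]
      refine Finset.sum_congr rfl fun i hi => ?_
      rw [← Finset.sum_erase s (hB0' i (Finset.mem_of_mem_erase hi))]
    rw [h2]
    have h3 : 0 ≤ ∑ i ∈ s.erase i₀, ∑ j ∈ s.erase i₀,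
        c i * c j * min (x i - m) (x j - m) := by
      refine ih (s.erase i₀) (Finset.erase_ssubset hi₀) (fun i => x i - m) c ?_
      intro i hi
      have := hmin i (Finset.mem_of_mem_erase hi)
      show (0:ℝ) ≤ x i - m
      linarith
    linarith

/-- The kernel `min/max` (with value 1 when both arguments vanish) is PSD
on nonnegative reals. -/
lemma min_div_max_psd {n : ℕ} (m c : Fin n → ℝ) (hm : ∀ i, 0 ≤ m i) :
    0 ≤ ∑ i, ∑ j, c i * c j *
      (if m i = 0 ∧ m j = 0 then (1 : ℝ) else min (m i) (m j) / max (m i) (m j)) := by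
  classical
  set zc : Fin n → ℝ := fun i => if m i = 0 then c i else 0 with hzc
  set d : Fin n → ℝ := fun i => if m i = 0 then 0 else c i / m i with hd
  have hpt : ∀ i j, c i * c j *
      (if m i = 0 ∧ m j = 0 then (1 : ℝ) else min (m i) (m j) / max (m i) (m j))
      = zc i * zc j + d i * d j * min (m i ^ 2) (m j ^ 2) := by
    intro i j
    by_cases hi : m i = 0 <;> by_cases hj : m j = 0 <;>
      simp only [hzc, hd, hi, hj, if_true, if_false, if_pos, if_neg]
    · simp
    · have hjpos : 0 < m j := lt_of_le_of_ne (hm j) (Ne.symm hj)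
      simp [hi, min_eq_left (hm j), max_eq_right (hm j)]
    · have hipos : 0 < m i := lt_of_le_of_ne (hm i) (Ne.symm hi)
      simp [hj, min_eq_right (hm i), max_eq_left (hm i)]
    · simp only [hi, hj, and_self, if_false]
      have hipos : 0 < m i := lt_of_le_of_ne (hm i) (Ne.symm hi)
      have hjpos : 0 < m j := lt_of_le_of_ne (hm j) (Ne.symm hj)
      have hminsq : min (m i ^ 2) (m j ^ 2) = (min (m i) (m j)) ^ 2 := by
        rcases le_total (m i) (m j) with h | h
        · rw [min_eq_left h, min_eq_left (by nlinarith)]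
        · rw [min_eq_right h, min_eq_right (by nlinarith)]
      have hmm : min (m i) (m j) * max (m i) (m j) = m i * m j := min_mul_max _ _
      have hminpos : 0 < min (m i) (m j) := lt_min hipos hjpos
      have e : min (m i) (m j) / max (m i) (m j)
          = min (m i) (m j) ^ 2 / (m i * m j) := by
        rw [← hmm, sq, mul_div_mul_left _ _ (ne_of_gt hminpos)]
      rw [hminsq, e]
      field_simp
      ring
  calc (0:ℝ) ≤ (∑ i, zc i) ^ 2 + ∑ i, ∑ j, d i * d j * min (m i ^ 2) (m j ^ 2) := by
        have := min_kernel_psd (Finset.univ : Finset (Fin n)) (fun i => m i ^ 2) d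
          (fun i _ => sq_nonneg _)
        positivity
    _ = ∑ i, ∑ j, (zc i * zc j + d i * d j * min (m i ^ 2) (m j ^ 2)) := by
        rw [sq, Finset.sum_mul_sum, ← Finset.sum_add_distrib]
        refine Finset.sum_congr rfl fun i _ => ?_
        rw [← Finset.sum_add_distrib]
    _ = ∑ i, ∑ j, c i * c j *
      (if m i = 0 ∧ m j = 0 then (1 : ℝ) else min (m i) (m j) / max (m i) (m j)) := by
        refine Finset.sum_congr rfl fun i _ => Finset.sum_congr rfl fun j _ => ?_
        rw [hpt]

/-- The kernel `D(A,B) = |μ(A) - μ(B)| / max{μ(A), μ(B)}` (defined to be `0` when both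
masses are `0`), for a nonnegative mass assignment `μ`, is conditionally negative
definite. -/
theorem normalized_mass_difference_cnd {S : Type*} (μ : S → ℝ) (hμ : ∀ A, 0 ≤ μ A)
    (n : ℕ) (A : Fin n → S) (c : Fin n → ℝ) (hc : ∑ i, c i = 0) :
    ∑ i, ∑ j, c i * c j *
      (if μ (A i) = 0 ∧ μ (A j) = 0 then (0 : ℝ)
        else |μ (A i) - μ (A j)| / max (μ (A i)) (μ (A j))) ≤ 0 := by
  classical
  set m : Fin n → ℝ := fun i => μ (A i) with hmdef
  have hm : ∀ i, 0 ≤ m i := fun i => hμ (A i)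
  have hpt : ∀ i j, (if m i = 0 ∧ m j = 0 then (0 : ℝ)
        else |m i - m j| / max (m i) (m j))
      = 1 - (if m i = 0 ∧ m j = 0 then (1 : ℝ) else min (m i) (m j) / max (m i) (m j)) := by
    intro i j
    by_cases h : m i = 0 ∧ m j = 0
    · simp [h]
    · rw [if_neg h, if_neg h]
      have hmaxpos : 0 < max (m i) (m j) := by
        rcases not_and_or.mp h with hi | hj
        · exact lt_of_lt_of_le (lt_of_le_of_ne (hm i) (Ne.symm hi)) (le_max_left _ _)
        · exact lt_of_lt_of_le (lt_of_le_of_ne (hm j) (Ne.symm hj)) (le_max_right _ _)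
      have habs : |m i - m j| = max (m i) (m j) - min (m i) (m j) := by
        rcases le_total (m i) (m j) with h | h
        · rw [abs_sub_comm, abs_of_nonneg (by linarith), max_eq_right h, min_eq_left h]
        · rw [abs_of_nonneg (by linarith), max_eq_left h, min_eq_right h]
      rw [habs, sub_div, div_self (ne_of_gt hmaxpos)]
  have hrw : ∑ i, ∑ j, c i * c j *
      (if m i = 0 ∧ m j = 0 then (0 : ℝ)
        else |m i - m j| / max (m i) (m j))
      = (∑ i, c i) * (∑ j, c j) - ∑ i, ∑ j, c i * c j *
        (if m i = 0 ∧ m j = 0 then (1 : ℝ) else min (m i) (m j) / max (m i) (m j)) := by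
    rw [Finset.sum_mul_sum, ← Finset.sum_sub_distrib]
    refine Finset.sum_congr rfl fun i _ => ?_
    rw [← Finset.sum_sub_distrib]
    refine Finset.sum_congr rfl fun j _ => ?_
    rw [hpt]; ring
  rw [hrw, hc]
  have := min_div_max_psd m c hm
  linarith
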